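/- Under the canonical isomorphism V*⊗V* ≅ (V⊗V)* (pairing f⊗g with v⊗w to f(v)·g(w)), the annihilator of the subspace R of V⊗V equals the K-span of the following elements of V*⊗V*: (a) all f_{ij}^I ⊗ f_{ab}^J (with r-indices ranging over the generator index set) such that it is NOT the case that [j = a and (either I = J, or i ∈ J and every m ∈ J∖{i} satisfies i < m < b)]; and (b) all elements f_{ij}^I ⊗ f_{jl}^J − f_{ij'}^I ⊗ f_{j'l}^{(J∖{j'})∪{j}}, where i ∈ J, every m ∈ J∖{i} satisfies i < m < l, j' ∈ J∖((J∩I)∪{i}), and all four lower-index pairs with their superscripts are valid indices of the basis of V. -/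

import Mathlib

/-!
Statement 1: under the canonical isomorphism `V* ⊗ V* ≅ (V ⊗ V)*`, the annihilator of the
subspace `R ⊆ V ⊗ V` of quadratic relations equals the span of the listed elements.
-/

noncomputable section

open scoped TensorProduct

/-- Index type for the basis `e_{ij}^I` of `V`:
`1 ≤ i < j ≤ n`, `I ⊆ {1,…,n}`, `|I| = k-1`, `i, j ∉ I`.  An element is `(I, i, j)`. -/
abbrev VIdx (n k : ℕ) : Type :=
  {x : Finset ℕ × ℕ × ℕ //
    x.1 ⊆ Finset.Icc 1 n ∧ x.1.card = k - 1 ∧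
    x.2.1 ∈ Finset.Icc 1 n ∧ x.2.2 ∈ Finset.Icc 1 n ∧
    x.2.1 < x.2.2 ∧ x.2.1 ∉ x.1 ∧ x.2.2 ∉ x.1}

variable (K : Type) [Field K] (n k : ℕ)

/-- The vector space `V` with basis indexed by `VIdx n k`. -/
abbrev V : Type := VIdx n k →₀ K

/-- The basis vector `e_{ij}^I` of `V`. -/
def e (g : VIdx n k) : V K n k := Finsupp.single g 1

/-- The dual basis vector `f_{ij}^I` of `V*`. -/
def f (g : VIdx n k) : Module.Dual K (V K n k) := Finsupp.lapply g

/-- The subspace `R ⊆ V ⊗ V` spanned by the quadratic parts (7)–(8) of the relations. -/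
def Rsub : Submodule K (V K n k ⊗[K] V K n k) :=
  Submodule.span K (
    -- (7) e_{ij}^I ⊗ e_{jl}^I
    {x | ∃ g1 g2 : VIdx n k, g1.1.1 = g2.1.1 ∧ g1.1.2.2 = g2.1.2.1 ∧
        x = e K n k g1 ⊗ₜ[K] e K n k g2} ∪
    -- (8) Σ_{1 ≤ j ≤ k-1, l_j ∉ M} e_{l₀l_j}^M ⊗ e_{l_jl_k}^{L∖{l_j,l_k}},
    -- L = {l₀ < ⋯ < l_k} ⊆ {1,…,n}, |M| = k-1, l₀ ∉ M
    {x | ∃ (l : ℕ → ℕ) (M : Finset ℕ) (a b : ℕ → VIdx n k),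
        (∀ s t : ℕ, s < t → t ≤ k → l s < l t) ∧
        (∀ t ≤ k, l t ∈ Finset.Icc 1 n) ∧
        M ⊆ Finset.Icc 1 n ∧ M.card = k - 1 ∧ l 0 ∉ M ∧
        (∀ j, 1 ≤ j → j ≤ k - 1 → l j ∉ M →
          (a j).1 = (M, l 0, l j) ∧
          (b j).1 = ((Finset.range (k + 1)).image l \ {l j, l k}, l j, l k)) ∧
        x = ∑ j ∈ (Finset.Ico 1 k).filter (fun j => l j ∉ M),
              e K n k (a j) ⊗ₜ[K] e K n k (b j)})

/-- The compatibility condition on a pair of indices: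
`j = a` and (either `I = J`, or `i ∈ J` and every `m ∈ J ∖ {i}` satisfies `i < m < b`). -/
def Compat (g g' : VIdx n k) : Prop :=
  g.1.2.2 = g'.1.2.1 ∧
    (g.1.1 = g'.1.1 ∨
      (g.1.2.1 ∈ g'.1.1 ∧ ∀ m ∈ g'.1.1 \ {g.1.2.1}, g.1.2.1 < m ∧ m < g'.1.2.2))

/-- The claimed spanning set of the annihilator, inside `V* ⊗ V*`. -/
def annS : Set (Module.Dual K (V K n k) ⊗[K] Module.Dual K (V K n k)) :=
  -- (a) f_{ij}^I ⊗ f_{ab}^J for incompatible pairs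
  {x | ∃ g g' : VIdx n k, ¬ Compat n k g g' ∧ x = f K n k g ⊗ₜ[K] f K n k g'} ∪
  -- (b) f_{ij}^I ⊗ f_{jl}^J - f_{ij'}^I ⊗ f_{j'l}^{(J∖{j'})∪{j}}
  {x | ∃ (g1 g2 g1' g2' : VIdx n k),
      g1.1.2.2 = g2.1.2.1 ∧ g1.1.2.1 ∈ g2.1.1 ∧
      (∀ m ∈ g2.1.1 \ {g1.1.2.1}, g1.1.2.1 < m ∧ m < g2.1.2.2) ∧
      g1'.1.2.2 ∈ g2.1.1 ∧ g1'.1.2.2 ∉ g2.1.1 ∩ g1.1.1 ∧ g1'.1.2.2 ≠ g1.1.2.1 ∧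
      g1'.1.1 = g1.1.1 ∧ g1'.1.2.1 = g1.1.2.1 ∧
      g2'.1 = (insert g1.1.2.2 (g2.1.1.erase g1'.1.2.2), g1'.1.2.2, g2.1.2.2) ∧
      x = f K n k g1 ⊗ₜ[K] f K n k g2 - f K n k g1' ⊗ₜ[K] f K n k g2'}

set_option linter.unusedSectionVars false

instance VIdx.finite : Finite (VIdx n k) := by
  classical
  apply Finite.of_injective
    (fun x : VIdx n k =>
      (⟨x.1, by
        rcases x with ⟨⟨I, i, j⟩, hI, _, hi, hj, _⟩
        simp only [Finset.mem_product, Finset.mem_powerset]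
        exact ⟨hI, hi, hj⟩⟩ :
        {y // y ∈ ((Finset.Icc 1 n).powerset ×ˢ (Finset.Icc 1 n) ×ˢ (Finset.Icc 1 n))}))
  intro a b h
  apply Subtype.ext
  simpa using congrArg Subtype.val h

instance VIdx.fintype : Fintype (VIdx n k) := Fintype.ofFinite _

lemma f_apply_e (g h : VIdx n k) : f K n k g (e K n k h) = if h = g then 1 else 0 := by
  simp [f, e, Finsupp.single_apply]

lemma dd_apply (g g' h h' : VIdx n k) :
    TensorProduct.dualDistrib K (V K n k) (V K n k) (f K n k g ⊗ₜ[K] f K n k g')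
      (e K n k h ⊗ₜ[K] e K n k h') = if h = g ∧ h' = g' then 1 else 0 := by
  rw [TensorProduct.dualDistrib_apply, f_apply_e, f_apply_e]
  by_cases h1 : h = g <;> by_cases h2 : h' = g' <;> simp [h1, h2]

/-- representation of a functional on V ⊗ V -/
lemma repr_eq (φ : Module.Dual K (V K n k ⊗[K] V K n k)) :
    TensorProduct.dualDistrib K (V K n k) (V K n k)
      (∑ p : VIdx n k × VIdx n k,
        φ (e K n k p.1 ⊗ₜ[K] e K n k p.2) • (f K n k p.1 ⊗ₜ[K] f K n k p.2)) = φ := by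
  classical
  apply Module.Basis.ext ((Finsupp.basisSingleOne (R := K)).tensorProduct
    (Finsupp.basisSingleOne (R := K)))
  rintro ⟨h1, h2⟩
  have hb : ((Finsupp.basisSingleOne (R := K)).tensorProduct
      (Finsupp.basisSingleOne (R := K))) (h1, h2) = e K n k h1 ⊗ₜ[K] e K n k h2 := by
    simp [Module.Basis.tensorProduct_apply, e, Finsupp.basisSingleOne]
  rw [hb, map_sum, LinearMap.sum_apply]
  have : ∀ p : VIdx n k × VIdx n k,
      (TensorProduct.dualDistrib K (V K n k) (V K n k)
        (φ (e K n k p.1 ⊗ₜ[K] e K n k p.2) • (f K n k p.1 ⊗ₜ[K] f K n k p.2)))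
        (e K n k h1 ⊗ₜ[K] e K n k h2)
      = if (h1, h2) = p then φ (e K n k p.1 ⊗ₜ[K] e K n k p.2) else 0 := by
    intro p
    rw [map_smul, LinearMap.smul_apply, dd_apply]
    by_cases hp : (h1, h2) = p
    · cases hp; simp
    · have : ¬(h1 = p.1 ∧ h2 = p.2) := by
        intro ⟨u, v⟩; exact hp (Prod.ext u v)
      simp [this, hp]
  rw [Finset.sum_congr rfl (fun p _ => this p), Finset.sum_ite_eq]
  simp

/-! ### Enumeration of a finite set of size `k+1` -/

def ell (k : ℕ) (L : Finset ℕ) (hL : L.card = k + 1) (j : ℕ) : ℕ :=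
  if h : j < k + 1 then (L.orderIsoOfFin hL ⟨j, h⟩ : ℕ) else 0

lemma ell_mem {k : ℕ} {L : Finset ℕ} (hL : L.card = k + 1) {j : ℕ} (hj : j ≤ k) :
    ell k L hL j ∈ L := by
  rw [ell, dif_pos (by omega)]
  exact (L.orderIsoOfFin hL ⟨j, by omega⟩).2

lemma ell_lt {k : ℕ} {L : Finset ℕ} (hL : L.card = k + 1) {s t : ℕ}
    (hst : s < t) (ht : t ≤ k) : ell k L hL s < ell k L hL t := by
  rw [ell, ell, dif_pos (by omega), dif_pos (by omega)]
  have : (⟨s, by omega⟩ : Fin (k+1)) < ⟨t, by omega⟩ := by exact hst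
  exact_mod_cast (L.orderIsoOfFin hL).lt_iff_lt.2 this

lemma ell_inj {k : ℕ} {L : Finset ℕ} (hL : L.card = k + 1) {s t : ℕ}
    (hs : s ≤ k) (ht : t ≤ k) (h : ell k L hL s = ell k L hL t) : s = t := by
  rcases lt_trichotomy s t with h' | h' | h'
  · exact absurd h (ne_of_lt (ell_lt hL h' ht))
  · exact h'
  · exact absurd h.symm (ne_of_lt (ell_lt hL h' hs))

lemma ell_image {k : ℕ} {L : Finset ℕ} (hL : L.card = k + 1) :
    (Finset.range (k + 1)).image (ell k L hL) = L := by
  apply Finset.ext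
  intro x
  simp only [Finset.mem_image, Finset.mem_range]
  constructor
  · rintro ⟨j, hj, rfl⟩; exact ell_mem hL (by omega)
  · intro hx
    refine ⟨(L.orderIsoOfFin hL).symm ⟨x, hx⟩, ((L.orderIsoOfFin hL).symm ⟨x, hx⟩).2, ?_⟩
    rw [ell, dif_pos ((L.orderIsoOfFin hL).symm ⟨x, hx⟩).2]
    have : (L.orderIsoOfFin hL) ((L.orderIsoOfFin hL).symm ⟨x, hx⟩) = ⟨x, hx⟩ := by
      simp
    rw [show (⟨((L.orderIsoOfFin hL).symm ⟨x, hx⟩ : Fin (k+1)), _⟩ : Fin (k+1))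
        = (L.orderIsoOfFin hL).symm ⟨x, hx⟩ from Fin.ext rfl, this]

lemma ell_zero {k : ℕ} {L : Finset ℕ} (hL : L.card = k + 1) (hne : L.Nonempty) :
    ell k L hL 0 = L.min' hne := by
  apply le_antisymm
  · apply Finset.le_min'
    intro y hy
    rw [← ell_image hL] at hy
    simp only [Finset.mem_image, Finset.mem_range] at hy
    obtain ⟨j, hj, rfl⟩ := hy
    rcases Nat.eq_zero_or_pos j with rfl | hj0
    · exact le_refl _
    · exact le_of_lt (ell_lt hL hj0 (by omega))
  · exact Finset.min'_le _ _ (ell_mem hL (by omega))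

lemma ell_last {k : ℕ} {L : Finset ℕ} (hL : L.card = k + 1) (hne : L.Nonempty) :
    ell k L hL k = L.max' hne := by
  apply le_antisymm
  · exact Finset.le_max' _ _ (ell_mem hL le_rfl)
  · apply Finset.max'_le
    intro y hy
    rw [← ell_image hL] at hy
    simp only [Finset.mem_image, Finset.mem_range] at hy
    obtain ⟨j, hj, rfl⟩ := hy
    rcases Nat.lt_or_ge j k with hj0 | hj0
    · exact le_of_lt (ell_lt hL hj0 le_rfl)
    · have : j = k := by omega
      subst this; exact le_refl _


/-! ### Structure of compatible pairs of the second kind -/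

/-- second-disjunct compatibility -/
def Pred2 (p : VIdx n k × VIdx n k) : Prop :=
  p.1.1.2.2 = p.2.1.2.1 ∧ p.1.1.2.1 ∈ p.2.1.1 ∧
    ∀ m ∈ p.2.1.1 \ {p.1.1.2.1}, p.1.1.2.1 < m ∧ m < p.2.1.2.2

/-- the key (L, M) of a pair -/
def keyL (p : VIdx n k × VIdx n k) : Finset ℕ :=
  p.2.1.1 ∪ {p.1.1.2.2, p.2.1.2.2}

lemma keyL_nonempty (p : VIdx n k × VIdx n k) : (keyL n k p).Nonempty :=
  ⟨p.1.1.2.2, by simp [keyL]⟩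

lemma pred2_facts {p : VIdx n k × VIdx n k} (h : Pred2 n k p) :
    (keyL n k p).min' (keyL_nonempty n k p) = p.1.1.2.1 ∧
    (keyL n k p).max' (keyL_nonempty n k p) = p.2.1.2.2 ∧
    (keyL n k p).card = k + 1 ∧
    p.2.1.1 = keyL n k p \ {p.1.1.2.2, p.2.1.2.2} ∧
    p.1.1.2.1 < p.1.1.2.2 ∧ p.1.1.2.2 < p.2.1.2.2 := by
  obtain ⟨hji, him, hbtw⟩ := h
  obtain ⟨_, _, _, _, hlt1, hni1, _⟩ := p.1.2
  obtain ⟨_, hcard2, _, _, hlt2, hni2, hnj2⟩ := p.2.2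
  have hjlt : p.1.1.2.2 < p.2.1.2.2 := hji ▸ hlt2
  have hjni : p.1.1.2.2 ∉ p.2.1.1 := hji ▸ hni2
  have hlb : ∀ y ∈ keyL n k p, p.1.1.2.1 ≤ y := by
    intro y hy
    simp only [keyL, Finset.mem_union, Finset.mem_insert, Finset.mem_singleton] at hy
    rcases hy with hy | hy | hy
    · by_cases hY : y = p.1.1.2.1
      · omega
      · exact le_of_lt (hbtw y (Finset.mem_sdiff.2 ⟨hy, by simp [hY]⟩)).1
    · omega
    · omega
  have hub : ∀ y ∈ keyL n k p, y ≤ p.2.1.2.2 := by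
    intro y hy
    simp only [keyL, Finset.mem_union, Finset.mem_insert, Finset.mem_singleton] at hy
    rcases hy with hy | hy | hy
    · by_cases hY : y = p.1.1.2.1
      · omega
      · exact le_of_lt (hbtw y (Finset.mem_sdiff.2 ⟨hy, by simp [hY]⟩)).2
    · omega
    · omega
  have hminmem : p.1.1.2.1 ∈ keyL n k p := by simp [keyL, him]
  have hmaxmem : p.2.1.2.2 ∈ keyL n k p := by simp [keyL]
  refine ⟨le_antisymm (Finset.min'_le _ _ hminmem) (Finset.le_min' _ _ _ hlb),
    le_antisymm (Finset.max'_le _ _ _ hub) (Finset.le_max' _ _ hmaxmem), ?_, ?_, hlt1, hjlt⟩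
  · have hpos : 0 < k - 1 := hcard2 ▸ Finset.card_pos.2 ⟨_, him⟩
    have hcard12 : ({p.1.1.2.2, p.2.1.2.2} : Finset ℕ).card = 2 := by
      rw [Finset.card_insert_of_notMem (by simp [ne_of_lt hjlt]), Finset.card_singleton]
    have hdis : Disjoint ({p.1.1.2.2, p.2.1.2.2} : Finset ℕ) p.2.1.1 := by
      simp only [Finset.disjoint_left, Finset.mem_insert, Finset.mem_singleton]
      rintro x (rfl | rfl) hx
      · exact hjni hx
      · exact hnj2 hx
    rw [keyL, Finset.union_comm, Finset.card_union_of_disjoint hdis, hcard12, hcard2]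
    omega
  · apply Finset.ext
    intro x
    simp only [keyL, Finset.mem_sdiff, Finset.mem_union, Finset.mem_insert,
      Finset.mem_singleton, not_or]
    constructor
    · intro hx
      refine ⟨Or.inl hx, ?_, ?_⟩
      · rintro rfl; exact hjni hx
      · rintro rfl; exact hnj2 hx
    · rintro ⟨hx | hx | hx, h1, h2⟩
      · exact hx
      · exact absurd hx h1
      · exact absurd hx h2

/-! ### Relation data lemmas -/

section RelData

variable {n k : ℕ} {l : ℕ → ℕ} {M : Finset ℕ} {a b : ℕ → VIdx n k}
variable (hk : 2 ≤ k)
variable (hmono : ∀ s t : ℕ, s < t → t ≤ k → l s < l t)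
variable (hab : ∀ j, 1 ≤ j → j ≤ k - 1 → l j ∉ M →
          (a j).1 = (M, l 0, l j) ∧
          (b j).1 = ((Finset.range (k + 1)).image l \ {l j, l k}, l j, l k))

include hk hmono hab

lemma pred2_ab {j : ℕ} (hj1 : 1 ≤ j) (hjk : j ≤ k - 1) (hjM : l j ∉ M) :
    Pred2 n k (a j, b j) := by
  obtain ⟨hA, hB⟩ := hab j hj1 hjk hjM
  have hinj : ∀ s t : ℕ, s ≤ k → t ≤ k → l s = l t → s = t := by
    intro s t hs ht h
    rcases lt_trichotomy s t with h' | h' | h'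
    · exact absurd h (ne_of_lt (hmono s t h' ht))
    · exact h'
    · exact absurd h.symm (ne_of_lt (hmono t s h' hs))
  refine ⟨by rw [hA, hB], ?_, ?_⟩
  · rw [hA, hB]
    simp only [Finset.mem_sdiff, Finset.mem_image, Finset.mem_range, Finset.mem_insert,
      Finset.mem_singleton, not_or]
    exact ⟨⟨0, by omega, rfl⟩,
      fun h => absurd (hinj 0 j (by omega) (by omega) h) (by omega),
      fun h => absurd (hinj 0 k (by omega) le_rfl h) (by omega)⟩
  · intro m hm
    rw [hB] at hm
    rw [hA, hB]
    simp only [Finset.mem_sdiff, Finset.mem_image, Finset.mem_range, Finset.mem_insert,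
      Finset.mem_singleton, not_or] at hm
    obtain ⟨⟨⟨t, ht, rfl⟩, htj, htk⟩, ht0⟩ := hm
    have hai : (a j).1.2.1 = l 0 := by rw [hA]
    have ht0' : t ≠ 0 := by rintro rfl; exact ht0 (by rw [hai])
    have htk' : t ≠ k := fun h => htk (by rw [h])
    exact ⟨hmono 0 t (by omega) (by omega), hmono t k (by omega) le_rfl⟩

lemma count_sum (K : Type) [Field K] (g g' : VIdx n k) (hP : Pred2 n k (g, g')) :
    ∑ j ∈ (Finset.Ico 1 k).filter (fun j => l j ∉ M),
        (if a j = g ∧ b j = g' then (1 : K) else 0)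
      = if M = g.1.1 ∧ (Finset.range (k + 1)).image l = keyL n k (g, g')
          then 1 else 0 := by
  classical
  have hinj : ∀ s t : ℕ, s ≤ k → t ≤ k → l s = l t → s = t := by
    intro s t hs ht h
    rcases lt_trichotomy s t with h' | h' | h'
    · exact absurd h (ne_of_lt (hmono s t h' ht))
    · exact h'
    · exact absurd h.symm (ne_of_lt (hmono t s h' hs))
  obtain ⟨hmin, hmax, hcard, hI', hij, hjj'⟩ := pred2_facts n k hP
  have hij : g.1.2.1 < g.1.2.2 := hij
  have hjj' : g.1.2.2 < g'.1.2.2 := hjj'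
  have hmin : (keyL n k (g, g')).min' (keyL_nonempty n k (g, g')) = g.1.2.1 := hmin
  have hmax : (keyL n k (g, g')).max' (keyL_nonempty n k (g, g')) = g'.1.2.2 := hmax
  have hI' : g'.1.1 = keyL n k (g, g') \ {g.1.2.2, g'.1.2.2} := hI'
  by_cases hMatch : M = g.1.1 ∧ (Finset.range (k + 1)).image l = keyL n k (g, g')
  · obtain ⟨hM, hL⟩ := hMatch
    -- l 0 is the min, l k is the max of keyL
    have hmem : ∀ t ≤ k, l t ∈ keyL n k (g, g') := by
      intro t ht
      rw [← hL]
      simp only [Finset.mem_image, Finset.mem_range]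
      exact ⟨t, by omega, rfl⟩
    have hsurj : ∀ x ∈ keyL n k (g, g'), ∃ t ≤ k, l t = x := by
      intro x hx
      rw [← hL] at hx
      simp only [Finset.mem_image, Finset.mem_range] at hx
      obtain ⟨t, ht, rfl⟩ := hx
      exact ⟨t, by omega, rfl⟩
    have hl0 : l 0 = g.1.2.1 := by
      rw [← hmin]
      apply le_antisymm
      · apply Finset.le_min'
        intro y hy
        obtain ⟨t, ht, rfl⟩ := hsurj y hy
        rcases Nat.eq_zero_or_pos t with rfl | h0
        · exact le_rfl
        · exact le_of_lt (hmono 0 t h0 ht)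
      · exact Finset.min'_le _ _ (hmem 0 (by omega))
    have hlk : l k = g'.1.2.2 := by
      rw [← hmax]
      apply le_antisymm
      · exact Finset.le_max' _ _ (hmem k le_rfl)
      · apply Finset.max'_le
        intro y hy
        obtain ⟨t, ht, rfl⟩ := hsurj y hy
        rcases Nat.lt_or_ge t k with h0 | h0
        · exact le_of_lt (hmono t k h0 le_rfl)
        · have : t = k := by omega
          subst this; exact le_rfl
    -- find the index j0 with l j0 = g.1.2.2
    have hgj : g.1.2.2 ∈ keyL n k (g, g') := by simp [keyL]
    obtain ⟨j0, hj0k, hlj0⟩ := hsurj _ hgj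
    have hj0pos : 1 ≤ j0 := by
      rcases Nat.eq_zero_or_pos j0 with rfl | h0
      · exact absurd (hl0 ▸ hlj0) (by omega)
      · exact h0
    have hj0k' : j0 < k := by
      rcases Nat.lt_or_ge j0 k with h0 | h0
      · exact h0
      · have : j0 = k := by omega
        subst this
        rw [hlk] at hlj0
        omega
    have hj0M : l j0 ∉ M := by rw [hlj0, hM]; exact g.2.2.2.2.2.2.2
    obtain ⟨hA0, hB0⟩ := hab j0 hj0pos (by omega) hj0M
    have hAg : a j0 = g := by
      apply Subtype.ext
      rw [hA0, hM, hl0, hlj0]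
    have hBg : b j0 = g' := by
      apply Subtype.ext
      have h21 : g.1.2.2 = g'.1.2.1 := hP.1
      rw [hB0, hL, hlj0, hlk, ← hI', h21]
    have hj0mem : j0 ∈ (Finset.Ico 1 k).filter (fun j => l j ∉ M) := by
      simp only [Finset.mem_filter, Finset.mem_Ico]
      exact ⟨⟨hj0pos, hj0k'⟩, hj0M⟩
    rw [if_pos ⟨hM, hL⟩]
    rw [Finset.sum_congr rfl (g := fun j => if j = j0 then (1 : K) else 0)]
    · rw [Finset.sum_ite_eq' _ j0 (fun _ => (1 : K)), if_pos hj0mem]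
    · intro j hj
      simp only [Finset.mem_filter, Finset.mem_Ico] at hj
      obtain ⟨⟨hj1, hjk⟩, hjM⟩ := hj
      by_cases hcase : j = j0
      · subst hcase
        rw [if_pos ⟨hAg, hBg⟩, if_pos rfl]
      · rw [if_neg, if_neg hcase]
        rintro ⟨ha, _⟩
        obtain ⟨hA, _⟩ := hab j hj1 (by omega) hjM
        apply hcase
        apply hinj j j0 (by omega) (by omega)
        have hthis : (a j).1.2.2 = l j := by rw [hA]
        rw [← hthis, ha, ← hlj0]
  · rw [if_neg hMatch]
    apply Finset.sum_eq_zero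
    intro j hj
    simp only [Finset.mem_filter, Finset.mem_Ico] at hj
    obtain ⟨⟨hj1, hjk⟩, hjM⟩ := hj
    rw [if_neg]
    rintro ⟨ha, hb⟩
    obtain ⟨hA, hB⟩ := hab j hj1 (by omega) hjM
    apply hMatch
    have hM : M = g.1.1 := by rw [← ha, hA]
    have hgj : g.1.2.2 = l j := by rw [← ha, hA]
    have hg'I : g'.1.1 = (Finset.range (k + 1)).image l \ {l j, l k} := by rw [← hb, hB]
    have hg'i : g'.1.2.1 = l j := by rw [← hb, hB]
    have hg'j : g'.1.2.2 = l k := by rw [← hb, hB]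
    refine ⟨hM, ?_⟩
    rw [keyL]
    apply Finset.ext
    intro x
    simp only [Finset.mem_union, Finset.mem_insert, Finset.mem_singleton, hg'I,
      Finset.mem_sdiff, Finset.mem_image, Finset.mem_range, not_or, hgj, hg'j]
    constructor
    · intro hx
      by_cases h1 : x = l j
      · exact Or.inr (Or.inl h1)
      · by_cases h2 : x = l k
        · exact Or.inr (Or.inr h2)
        · exact Or.inl ⟨hx, h1, h2⟩
    · rintro (⟨⟨t, ht, rfl⟩, _, _⟩ | rfl | rfl)
      · exact ⟨t, ht, rfl⟩
      · exact ⟨j, by omega, rfl⟩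
      · exact ⟨k, by omega, rfl⟩

end RelData

/-! ### Properties of type (b) generators -/

section BGen

variable {n k : ℕ} {g1 g2 g1' g2' : VIdx n k}
variable (hji : g1.1.2.2 = g2.1.2.1) (him : g1.1.2.1 ∈ g2.1.1)
variable (hbtw : ∀ m ∈ g2.1.1 \ {g1.1.2.1}, g1.1.2.1 < m ∧ m < g2.1.2.2)
variable (hmem : g1'.1.2.2 ∈ g2.1.1) (hnint : g1'.1.2.2 ∉ g2.1.1 ∩ g1.1.1)
variable (hne : g1'.1.2.2 ≠ g1.1.2.1)
variable (hI : g1'.1.1 = g1.1.1) (hi : g1'.1.2.1 = g1.1.2.1)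
variable (hg2' : g2'.1 = (insert g1.1.2.2 (g2.1.1.erase g1'.1.2.2), g1'.1.2.2, g2.1.2.2))

include hji him hbtw hmem hne hi hg2'

lemma pred2_of_bgen' : Pred2 n k (g1', g2') := by
  have h2I : g2'.1.1 = insert g1.1.2.2 (g2.1.1.erase g1'.1.2.2) := by rw [hg2']
  have h2i : g2'.1.2.1 = g1'.1.2.2 := by rw [hg2']
  have h2j : g2'.1.2.2 = g2.1.2.2 := by rw [hg2']
  refine ⟨h2i.symm, ?_, ?_⟩
  · rw [h2I, hi]
    exact Finset.mem_insert_of_mem (Finset.mem_erase.2 ⟨fun h => hne h.symm, him⟩)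
  · intro m hm
    rw [Finset.mem_sdiff, h2I, hi, Finset.mem_insert, Finset.mem_erase,
      Finset.mem_singleton] at hm
    rw [hi, h2j]
    obtain ⟨hm1 | ⟨hm2, hm3⟩, hm4⟩ := hm
    · subst hm1
      exact ⟨g1.2.2.2.2.2.1, hji ▸ g2.2.2.2.2.2.1⟩
    · exact hbtw m (Finset.mem_sdiff.2 ⟨hm3, by simpa using hm4⟩)

lemma keyL_of_bgen' : keyL n k (g1', g2') = keyL n k (g1, g2) := by
  have h2I : g2'.1.1 = insert g1.1.2.2 (g2.1.1.erase g1'.1.2.2) := by rw [hg2']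
  have h2j : g2'.1.2.2 = g2.1.2.2 := by rw [hg2']
  rw [keyL, keyL, h2I, h2j]
  apply Finset.ext
  intro x
  simp only [Finset.mem_union, Finset.mem_insert, Finset.mem_erase, Finset.mem_singleton]
  constructor
  · rintro ((rfl | ⟨h1, h2⟩) | rfl | rfl)
    · exact Or.inr (Or.inl rfl)
    · exact Or.inl h2
    · exact Or.inl hmem
    · exact Or.inr (Or.inr rfl)
  · rintro (hx | rfl | rfl)
    · by_cases hx' : x = g1'.1.2.2
      · exact Or.inr (Or.inl hx')
      · exact Or.inl (Or.inr ⟨hx', hx⟩)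
    · exact Or.inl (Or.inl rfl)
    · exact Or.inr (Or.inr rfl)

end BGen

/-! ### The forward inclusion -/

lemma forward (K : Type) [Field K] (n k : ℕ) (hk : 2 ≤ k) :
    Submodule.map (TensorProduct.dualDistrib K (V K n k) (V K n k))
      (Submodule.span K (annS K n k)) ≤ (Rsub K n k).dualAnnihilator := by
  rw [Submodule.map_le_iff_le_comap, Submodule.span_le]
  intro x hx
  simp only [SetLike.mem_coe, Submodule.mem_comap, Submodule.mem_dualAnnihilator]
  intro w hw
  have key : Rsub K n k ≤ LinearMap.ker (TensorProduct.dualDistrib K (V K n k) (V K n k) x) := by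
    rw [Rsub, Submodule.span_le]
    rintro w' (⟨h1, h2, hII, hjj, rfl⟩ | ⟨l, M, a, b, hmono, hIcc, hMs, hMc, hl0, hab, rfl⟩) <;>
      simp only [SetLike.mem_coe, LinearMap.mem_ker] <;>
      rcases hx with ⟨g, g', hnc, rfl⟩ | ⟨G1, G2, G1', G2', hji, him, hbtw, hmem, hnint,
        hne, hI, hi, hg2', rfl⟩
    · -- (a) vs (7)
      rw [dd_apply, if_neg]
      rintro ⟨rfl, rfl⟩
      exact hnc ⟨hjj, Or.inl hII⟩
    · -- (b) vs (7)
      rw [map_sub, LinearMap.sub_apply, dd_apply, dd_apply, if_neg, if_neg, sub_zero]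
      · rintro ⟨rfl, rfl⟩
        have hmm : (h1 : Finset ℕ × ℕ × ℕ).2.1 ∈ (h2 : Finset ℕ × ℕ × ℕ).1 :=
          (pred2_of_bgen' hji him hbtw hmem hne hi hg2').2.1
        rw [← hII] at hmm
        exact h1.2.2.2.2.2.2.1 hmm
      · rintro ⟨rfl, rfl⟩
        rw [← hII] at him
        exact h1.2.2.2.2.2.2.1 him
    · -- (a) vs (8)
      rw [map_sum]
      apply Finset.sum_eq_zero
      intro j hj
      simp only [Finset.mem_filter, Finset.mem_Ico] at hj
      obtain ⟨⟨hj1, hjk⟩, hjM⟩ := hj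
      rw [dd_apply, if_neg]
      rintro ⟨rfl, rfl⟩
      have := pred2_ab hk hmono hab hj1 (by omega) hjM
      exact hnc ⟨this.1, Or.inr ⟨this.2.1, this.2.2⟩⟩
    · -- (b) vs (8)
      rw [map_sub, LinearMap.sub_apply, map_sum, map_sum]
      have e1 : ∀ j ∈ (Finset.Ico 1 k).filter (fun j => l j ∉ M),
          (TensorProduct.dualDistrib K (V K n k) (V K n k) (f K n k G1 ⊗ₜ[K] f K n k G2))
            (e K n k (a j) ⊗ₜ[K] e K n k (b j))
          = if a j = G1 ∧ b j = G2 then (1 : K) else 0 := fun j _ => dd_apply K n k _ _ _ _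
      have e2 : ∀ j ∈ (Finset.Ico 1 k).filter (fun j => l j ∉ M),
          (TensorProduct.dualDistrib K (V K n k) (V K n k) (f K n k G1' ⊗ₜ[K] f K n k G2'))
            (e K n k (a j) ⊗ₜ[K] e K n k (b j))
          = if a j = G1' ∧ b j = G2' then (1 : K) else 0 := fun j _ => dd_apply K n k _ _ _ _
      rw [Finset.sum_congr rfl e1, Finset.sum_congr rfl e2,
        count_sum hk hmono hab K G1 G2 ⟨hji, him, hbtw⟩,
        count_sum hk hmono hab K G1' G2'
          (pred2_of_bgen' hji him hbtw hmem hne hi hg2'),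
        keyL_of_bgen' hji him hbtw hmem hne hi hg2', hI, sub_self]
  have := key hw
  rw [LinearMap.mem_ker] at this
  exact this

/-! ### The canonical relation attached to a key (L, M) -/

section Canonical

variable {n k : ℕ}

abbrev VP (n k : ℕ) (x : Finset ℕ × ℕ × ℕ) : Prop :=
  x.1 ⊆ Finset.Icc 1 n ∧ x.1.card = k - 1 ∧
    x.2.1 ∈ Finset.Icc 1 n ∧ x.2.2 ∈ Finset.Icc 1 n ∧
    x.2.1 < x.2.2 ∧ x.2.1 ∉ x.1 ∧ x.2.2 ∉ x.1

def relA (n k : ℕ) (L M : Finset ℕ) (hL : L.card = k + 1) (d : VIdx n k) (j : ℕ) :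
    VIdx n k :=
  if h : VP n k (M, ell k L hL 0, ell k L hL j) then ⟨_, h⟩ else d

def relB (n k : ℕ) (L M : Finset ℕ) (hL : L.card = k + 1) (d : VIdx n k) (j : ℕ) :
    VIdx n k :=
  if h : VP n k (L \ {ell k L hL j, ell k L hL k}, ell k L hL j, ell k L hL k)
    then ⟨_, h⟩ else d

variable {L M : Finset ℕ} (hL : L.card = k + 1) {d : VIdx n k}
variable (hk : 2 ≤ k) (hLsub : L ⊆ Finset.Icc 1 n) (hMsub : M ⊆ Finset.Icc 1 n)
variable (hMcard : M.card = k - 1) (hminM : ell k L hL 0 ∉ M)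

include hk hLsub hMsub hMcard hminM

lemma rel_spec : ∀ j, 1 ≤ j → j ≤ k - 1 → ell k L hL j ∉ M →
    (relA n k L M hL d j).1 = (M, ell k L hL 0, ell k L hL j) ∧
    (relB n k L M hL d j).1 =
      ((Finset.range (k + 1)).image (ell k L hL) \ {ell k L hL j, ell k L hL k},
        ell k L hL j, ell k L hL k) := by
  intro j hj1 hjk hjM
  have hjk' : j < k := by omega
  have hjlk : ell k L hL j < ell k L hL k := ell_lt hL hjk' le_rfl
  constructor
  · rw [relA, dif_pos ⟨hMsub, hMcard, hLsub (ell_mem (j := 0) hL (by omega)),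
      hLsub (ell_mem (j := j) hL (by omega)), ell_lt (s := 0) (t := j) hL (by omega) (by omega), hminM, hjM⟩]
  · have hsub : ({ell k L hL j, ell k L hL k} : Finset ℕ) ⊆ L := by
      intro x hx
      simp only [Finset.mem_insert, Finset.mem_singleton] at hx
      rcases hx with rfl | rfl
      · exact ell_mem hL (by omega)
      · exact ell_mem hL le_rfl
    have hcard2 : ({ell k L hL j, ell k L hL k} : Finset ℕ).card = 2 := by
      rw [Finset.card_insert_of_notMem (by simp [ne_of_lt hjlk]), Finset.card_singleton]
    rw [relB, dif_pos ⟨(Finset.sdiff_subset).trans hLsub,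
      by rw [Finset.card_sdiff_of_subset hsub, hL, hcard2]; omega,
      hLsub (ell_mem hL (by omega)), hLsub (ell_mem hL le_rfl), hjlk,
      by simp, by simp⟩, ell_image]

lemma rel_mem (K : Type) [Field K] :
    ∑ j ∈ (Finset.Ico 1 k).filter (fun j => ell k L hL j ∉ M),
        e K n k (relA n k L M hL d j) ⊗ₜ[K] e K n k (relB n k L M hL d j)
      ∈ Rsub K n k := by
  apply Submodule.subset_span
  refine Or.inr ⟨ell k L hL, M, relA n k L M hL d, relB n k L M hL d,
    fun s t hst ht => ell_lt hL hst ht, fun t ht => hLsub (ell_mem hL ht),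
    hMsub, hMcard, hminM, rel_spec hL hk hLsub hMsub hMcard hminM, rfl⟩

lemma fiber_sum {N : Type} [AddCommMonoid N]
    [DecidablePred (fun p : VIdx n k × VIdx n k =>
      (keyL n k p, p.1.1.1) = (L, M))]
    [DecidablePred (fun j : ℕ => ell k L hL j ∉ M)]
    [DecidablePred (Pred2 n k)]
    (F : VIdx n k × VIdx n k → N) :
    ∑ p ∈ (Finset.univ.filter (Pred2 n k)).filter
        (fun p => (keyL n k p, p.1.1.1) = (L, M)), F p
      = ∑ j ∈ (Finset.Ico 1 k).filter (fun j => ell k L hL j ∉ M),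
          F (relA n k L M hL d j, relB n k L M hL d j) := by
  have spec := rel_spec (d := d) hL hk hLsub hMsub hMcard hminM
  refine (Finset.sum_bij
    (fun j _ => (relA n k L M hL d j, relB n k L M hL d j)) ?_ ?_ ?_ ?_).symm
  · -- maps into the fiber
    intro j hj
    simp only [Finset.mem_filter, Finset.mem_Ico] at hj
    obtain ⟨⟨hj1, hjk⟩, hjM⟩ := hj
    obtain ⟨hA, hB⟩ := spec j hj1 (by omega) hjM
    have hP : Pred2 n k (relA n k L M hL d j, relB n k L M hL d j) :=
      pred2_ab hk (fun s t hst ht => ell_lt hL hst ht)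
        (fun j hj1 hjk hjM => spec j hj1 hjk hjM) hj1 (by omega) hjM
    simp only [Finset.mem_filter, Finset.mem_univ, true_and]
    refine ⟨hP, ?_⟩
    have hkey : keyL n k (relA n k L M hL d j, relB n k L M hL d j) = L := by
      rw [keyL]
      have h1 : (relB n k L M hL d j).1.1 =
          L \ {ell k L hL j, ell k L hL k} := by rw [hB, ell_image]
      have h2 : (relA n k L M hL d j).1.2.2 = ell k L hL j := by rw [hA]
      have h3 : (relB n k L M hL d j).1.2.2 = ell k L hL k := by rw [hB]
      rw [h1, h2, h3]
      apply Finset.ext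
      intro x
      simp only [Finset.mem_union, Finset.mem_sdiff, Finset.mem_insert,
        Finset.mem_singleton, not_or]
      constructor
      · rintro (⟨hx, _, _⟩ | rfl | rfl)
        · exact hx
        · exact ell_mem hL (by omega)
        · exact ell_mem hL le_rfl
      · intro hx
        by_cases h1 : x = ell k L hL j
        · exact Or.inr (Or.inl h1)
        · by_cases h2 : x = ell k L hL k
          · exact Or.inr (Or.inr h2)
          · exact Or.inl ⟨hx, h1, h2⟩
    have hMeq : (relA n k L M hL d j).1.1 = M := by rw [hA]
    rw [hkey, hMeq]
  · -- injective
    intro j1 hj1 j2 hj2 h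
    simp only [Finset.mem_filter, Finset.mem_Ico] at hj1 hj2
    have e1 : (relA n k L M hL d j1).1.2.2 = ell k L hL j1 :=
      by rw [(spec j1 hj1.1.1 (by omega) hj1.2).1]
    have e2 : (relA n k L M hL d j2).1.2.2 = ell k L hL j2 :=
      by rw [(spec j2 hj2.1.1 (by omega) hj2.2).1]
    have h' : relA n k L M hL d j1 = relA n k L M hL d j2 := congrArg Prod.fst h
    have : ell k L hL j1 = ell k L hL j2 := by rw [← e1, ← e2, h']
    exact ell_inj hL (by omega) (by omega) this
  · -- surjective
    intro p hp
    simp only [Finset.mem_filter, Finset.mem_univ, true_and, Prod.mk.injEq] at hp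
    obtain ⟨hP, hkey, hM⟩ := hp
    obtain ⟨hmin, hmax, hcard, hI', hij, hjj'⟩ := pred2_facts n k hP
    have hij : p.1.1.2.1 < p.1.1.2.2 := hij
    have hjj' : p.1.1.2.2 < p.2.1.2.2 := hjj'
    have hne : L.Nonempty := Finset.card_pos.1 (by omega)
    have hminL : L.min' hne = p.1.1.2.1 := by
      apply le_antisymm
      · apply Finset.min'_le
        rw [← hkey, ← hmin]
        exact Finset.min'_mem _ _
      · apply Finset.le_min'
        intro y hy
        rw [← hmin]
        exact Finset.min'_le _ _ (by rw [hkey]; exact hy)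
    have hmaxL : L.max' hne = p.2.1.2.2 := by
      apply le_antisymm
      · apply Finset.max'_le
        intro y hy
        rw [← hmax]
        exact Finset.le_max' _ _ (by rw [hkey]; exact hy)
      · apply Finset.le_max'
        rw [← hkey, ← hmax]
        exact Finset.max'_mem _ _
    have hI'' : p.2.1.1 = L \ {p.1.1.2.2, p.2.1.2.2} := by rw [← hkey, hI']
    have hmemj : p.1.1.2.2 ∈ L := by
      rw [← hkey, keyL]; simp
    rw [← ell_image hL] at hmemj
    simp only [Finset.mem_image, Finset.mem_range] at hmemj
    obtain ⟨j0, hj0, hlj0⟩ := hmemj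
    have hl0 : ell k L hL 0 = p.1.1.2.1 := by rw [ell_zero hL hne, hminL]
    have hlk : ell k L hL k = p.2.1.2.2 := by rw [ell_last hL hne, hmaxL]
    have hj0pos : 1 ≤ j0 := by
      rcases Nat.eq_zero_or_pos j0 with rfl | h0
      · rw [hl0] at hlj0; omega
      · exact h0
    have hj0k : j0 < k := by
      rcases Nat.lt_or_ge j0 k with h0 | h0
      · exact h0
      · have : j0 = k := by omega
        subst this; rw [hlk] at hlj0; omega
    have hj0M : ell k L hL j0 ∉ M := by
      rw [hlj0, ← hM]; exact p.1.2.2.2.2.2.2.2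
    refine ⟨j0, ?_, ?_⟩
    · simp only [Finset.mem_filter, Finset.mem_Ico]
      exact ⟨⟨hj0pos, hj0k⟩, hj0M⟩
    · obtain ⟨hA, hB⟩ := spec j0 hj0pos (by omega) hj0M
      have hp1 : relA n k L M hL d j0 = p.1 := by
        apply Subtype.ext
        rw [hA, hl0, hlj0, ← hM]
      have hp2 : relB n k L M hL d j0 = p.2 := by
        apply Subtype.ext
        have h21 : p.1.1.2.2 = p.2.1.2.1 := hP.1
        rw [hB, ell_image, hlj0, hlk, ← hI'', h21]
      exact Prod.ext hp1 hp2
  · intro j hj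
    rfl

end Canonical

/-! ### Differences within a fiber are generators -/

lemma diff_mem (K : Type) [Field K] (n k : ℕ) (p q : VIdx n k × VIdx n k)
    (hp : Pred2 n k p) (hq : Pred2 n k q)
    (hkey : keyL n k p = keyL n k q) (hM : p.1.1.1 = q.1.1.1) (hpq : p ≠ q) :
    f K n k p.1 ⊗ₜ[K] f K n k p.2 - f K n k q.1 ⊗ₜ[K] f K n k q.2 ∈ annS K n k := by
  obtain ⟨pmin, pmax, pcard, pI, pij, pjj⟩ := pred2_facts n k hp
  obtain ⟨qmin, qmax, qcard, qI, qij, qjj⟩ := pred2_facts n k hq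
  have pij : p.1.1.2.1 < p.1.1.2.2 := pij
  have pjj : p.1.1.2.2 < p.2.1.2.2 := pjj
  have qij : q.1.1.2.1 < q.1.1.2.2 := qij
  have qjj : q.1.1.2.2 < q.2.1.2.2 := qjj
  have pI : p.2.1.1 = keyL n k p \ {p.1.1.2.2, p.2.1.2.2} := pI
  have qI : q.2.1.1 = keyL n k q \ {q.1.1.2.2, q.2.1.2.2} := qI
  -- min and max agree
  have hmin : p.1.1.2.1 = q.1.1.2.1 := by
    rw [← pmin, ← qmin]
    congr 1
  have hmax : p.2.1.2.2 = q.2.1.2.2 := by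
    rw [← pmax, ← qmax]
    congr 1
  -- the lower j's differ
  have hjne : q.1.1.2.2 ≠ p.1.1.2.2 := by
    intro h
    apply hpq
    have h1 : p.1 = q.1 := Subtype.ext (Prod.ext hM (Prod.ext hmin h.symm))
    have h2 : p.2 = q.2 := by
      apply Subtype.ext
      have hp21 : p.2.1.2.1 = p.1.1.2.2 := hp.1.symm
      have hq21 : q.2.1.2.1 = q.1.1.2.2 := hq.1.symm
      refine Prod.ext ?_ (Prod.ext ?_ ?_)
      · rw [pI, qI, hkey, h, hmax]
      · rw [hp21, hq21, h]
      · exact hmax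
    exact Prod.ext h1 h2
  have hqjL : q.1.1.2.2 ∈ keyL n k p := by
    rw [hkey, keyL]; simp
  refine Or.inr ⟨p.1, p.2, q.1, q.2, hp.1, hp.2.1, hp.2.2, ?_, ?_, ?_, ?_, ?_, ?_, rfl⟩
  · -- q.1.j ∈ p.2.I
    rw [pI, Finset.mem_sdiff]
    refine ⟨hqjL, ?_⟩
    simp only [Finset.mem_insert, Finset.mem_singleton, not_or]
    exact ⟨hjne, by omega⟩
  · -- q.1.j ∉ p.2.I ∩ p.1.I
    rw [Finset.mem_inter, not_and_or]
    right
    rw [hM]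
    exact q.1.2.2.2.2.2.2.2
  · -- q.1.j ≠ p.1.i
    omega
  · exact Prod.ext_iff.1 (Subtype.ext_iff.1 rfl) |>.1 ▸ hM.symm
  · rw [hmin]
  · -- q.2.1 = (insert p.1.j (p.2.I.erase q.1.j), q.1.j, p.2.j)
    have hq21 : q.2.1.2.1 = q.1.1.2.2 := hq.1.symm
    refine Prod.ext ?_ (Prod.ext hq21 hmax.symm)
    rw [qI, ← hkey, pI]
    apply Finset.ext
    intro x
    simp only [Finset.mem_insert, Finset.mem_erase, Finset.mem_sdiff, Finset.mem_insert,
      Finset.mem_singleton, not_or, hmax]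
    constructor
    · rintro ⟨hx, hx1, hx2⟩
      by_cases h : x = p.1.1.2.2
      · exact Or.inl h
      · exact Or.inr ⟨hx1, hx, h, hx2⟩
    · rintro (rfl | ⟨hx1, hx, hx2, hx3⟩)
      · refine ⟨by simp [keyL], fun h => hjne h.symm, by omega⟩
      · exact ⟨hx, hx1, hx3⟩

lemma min'_congr {s t : Finset ℕ} (h : s = t) (hs : s.Nonempty) (ht : t.Nonempty) :
    s.min' hs = t.min' ht := by subst h; rfl

lemma reverse (K : Type) [Field K] (n k : ℕ) (hk : 2 ≤ k) :
    (Rsub K n k).dualAnnihilator ≤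
      Submodule.map (TensorProduct.dualDistrib K (V K n k) (V K n k))
        (Submodule.span K (annS K n k)) := by
  classical
  intro φ hφ
  rw [Submodule.mem_dualAnnihilator] at hφ
  refine Submodule.mem_map.2 ⟨∑ p : VIdx n k × VIdx n k,
    φ (e K n k p.1 ⊗ₜ[K] e K n k p.2) • (f K n k p.1 ⊗ₜ[K] f K n k p.2), ?_,
    repr_eq K n k φ⟩
  set c : VIdx n k × VIdx n k → K := fun p => φ (e K n k p.1 ⊗ₜ[K] e K n k p.2) with hc
  have hc7 : ∀ p : VIdx n k × VIdx n k, p.1.1.1 = p.2.1.1 → p.1.1.2.2 = p.2.1.2.1 →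
      c p = 0 := by
    intro p hII hjj
    exact hφ _ (Submodule.subset_span (Or.inl ⟨p.1, p.2, hII, hjj, rfl⟩))
  rw [← Finset.sum_filter_add_sum_filter_not Finset.univ (Pred2 n k)]
  apply Submodule.add_mem
  · -- the Pred2 part
    rw [← Finset.sum_fiberwise_of_maps_to
      (t := (Finset.univ.filter (Pred2 n k)).image (fun p => (keyL n k p, p.1.1.1)))
      (g := fun p => (keyL n k p, p.1.1.1))
      (fun p hp => Finset.mem_image_of_mem _ hp)]
    apply Submodule.sum_mem
    rintro ⟨L, M⟩ hy
    obtain ⟨p0, hp0mem, hp0key⟩ := Finset.mem_image.1 hy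
    rw [Finset.mem_filter] at hp0mem
    have hP0 : Pred2 n k p0 := hp0mem.2
    have hkey0 : keyL n k p0 = L := (Prod.ext_iff.1 hp0key).1
    have hM0 : p0.1.1.1 = M := (Prod.ext_iff.1 hp0key).2
    obtain ⟨hmin, hmax, hcard, hI', hij, hjj'⟩ := pred2_facts n k hP0
    have hL : L.card = k + 1 := by rw [← hkey0]; exact hcard
    have hneL : L.Nonempty := Finset.card_pos.1 (by omega)
    have hLsub : L ⊆ Finset.Icc 1 n := by
      rw [← hkey0, keyL]
      apply Finset.union_subset p0.2.2.1
      rw [Finset.insert_subset_iff, Finset.singleton_subset_iff]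
      exact ⟨p0.1.2.2.2.2.1, p0.2.2.2.2.2.1⟩
    have hMsub : M ⊆ Finset.Icc 1 n := by rw [← hM0]; exact p0.1.2.1
    have hMcard : M.card = k - 1 := by rw [← hM0]; exact p0.1.2.2.1
    have hell0 : ell k L hL 0 = p0.1.1.2.1 := by
      rw [ell_zero hL hneL, min'_congr hkey0.symm hneL (keyL_nonempty n k p0)]
      exact hmin
    have hminM : ell k L hL 0 ∉ M := by
      rw [hell0, ← hM0]
      exact p0.1.2.2.2.2.2.2.1
    have hrel := rel_mem (d := p0.1) hL hk hLsub hMsub hMcard hminM K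
    have hsum0 : ∑ j ∈ (Finset.Ico 1 k).filter (fun j => ell k L hL j ∉ M),
        c (relA n k L M hL p0.1 j, relB n k L M hL p0.1 j) = 0 := by
      have h0 := hφ _ hrel
      rw [map_sum] at h0
      exact h0
    have hTsum : ∑ p ∈ (Finset.univ.filter (Pred2 n k)).filter
        (fun p => (keyL n k p, p.1.1.1) = (L, M)), c p = 0 := by
      rw [fiber_sum hL hk hLsub hMsub hMcard hminM (d := p0.1) c]
      exact hsum0
    have expand : ∀ p : VIdx n k × VIdx n k,
        c p • (f K n k p.1 ⊗ₜ[K] f K n k p.2)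
          = c p • ((f K n k p.1 ⊗ₜ[K] f K n k p.2)
              - (f K n k p0.1 ⊗ₜ[K] f K n k p0.2))
            + c p • (f K n k p0.1 ⊗ₜ[K] f K n k p0.2) := fun p => by
      rw [smul_sub, sub_add_cancel]
    rw [Finset.sum_congr rfl (fun p _ => expand p), Finset.sum_add_distrib,
      ← Finset.sum_smul, hTsum, zero_smul, add_zero]
    apply Submodule.sum_mem
    intro p hpT
    rw [Finset.mem_filter, Finset.mem_filter, Prod.mk.injEq] at hpT
    obtain ⟨⟨_, hPp⟩, hkeyp, hMp⟩ := hpT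
    rcases eq_or_ne p p0 with rfl | hne
    · rw [sub_self, smul_zero]
      exact Submodule.zero_mem _
    · exact Submodule.smul_mem _ _ (Submodule.subset_span
        (diff_mem K n k p p0 hPp hP0 (by rw [hkeyp, hkey0]) (by rw [hMp, hM0]) hne))
  · -- the non-Pred2 part
    apply Submodule.sum_mem
    intro p hp
    rw [Finset.mem_filter] at hp
    by_cases hcpt : Compat n k p.1 p.2
    · have hII : p.1.1.1 = p.2.1.1 := by
        rcases hcpt.2 with h | h
        · exact h
        · exact absurd ⟨hcpt.1, h⟩ hp.2
      have h0 : φ (e K n k p.1 ⊗ₜ[K] e K n k p.2) = 0 := hc7 p hII hcpt.1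
      rw [h0, zero_smul]
      exact Submodule.zero_mem _
    · exact Submodule.smul_mem _ _ (Submodule.subset_span
        (Or.inl ⟨p.1, p.2, hcpt, rfl⟩))


/-- Under the canonical isomorphism `V* ⊗ V* ≅ (V ⊗ V)*` (pairing
`f ⊗ g` with `v ⊗ w` to `f(v)·g(w)`, i.e. `TensorProduct.dualDistrib`), the annihilator of
`R` equals the span of the elements (a) and (b). -/
theorem statement1 (hk : 2 ≤ k) (hn : k < n) :
    Submodule.map (TensorProduct.dualDistrib K (V K n k) (V K n k))
        (Submodule.span K (annS K n k)) =
      (Rsub K n k).dualAnnihilator :=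
  le_antisymm (forward K n k hk) (reverse K n k hk)

end
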